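/- Let 𝒦 be a finite set and 𝒯, 𝒵 countable sets, and let ε, δ ∈ [0,1). Let P be a pmf on 𝒦×𝒦×𝒦×𝒯×𝒵 with coordinates denoted (K, Kx, Ky, F, Z) such that Pr_P[K = Kx = Ky] ≥ 1 − ε and d(P_{KFZ}, P_unif × P_{FZ}) ≤ δ. Then there exists a pmf Q on 𝒦×𝒦×𝒦×𝒦×𝒯×𝒵 with coordinates (K′, K, Kx, Ky, F, Z) whose marginal on (K, Kx, Ky, F, Z) equals P, such that Q_{K′FZ} = P_unif × P_{FZ} (exact uniformity and independence) and Pr_Q[K′ = Kx = Ky] ≥ 1 − ε − δ. (Conversion of an (ε,δ)-secret key into an (ε+δ,0)-secret key of the same length.) -/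

import Mathlib

open scoped BigOperators

noncomputable section

/-- Probability of a set under a pmf. -/
def probOf {α : Type*} (P : α → ℝ) (S : Set α) : ℝ := ∑' a : S, P a

/-- `P` is a probability mass function. -/
def IsPMF {α : Type*} (P : α → ℝ) : Prop := (∀ a, 0 ≤ P a) ∧ ∑' a, P a = 1

/-- Variational distance between two pmfs. -/
def tvDist {α : Type*} (P Q : α → ℝ) : ℝ := (1 / 2) * ∑' a, |P a - Q a|

section Aux

lemma summable_finset_sum' {ι β : Type*} (s : Finset ι) (f : ι → β → ℝ)
    (h : ∀ i ∈ s, Summable (f i)) : Summable fun x => ∑ i ∈ s, f i x := by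
  classical
  induction s using Finset.induction_on with
  | empty => simpa using summable_zero
  | @insert a t ha ih =>
      simp only [Finset.sum_insert ha]
      exact (h a (Finset.mem_insert_self a t)).add
        (ih fun i hi => h i (Finset.mem_insert_of_mem hi))

lemma tsum_prod_fintype {α β : Type*} [Fintype α] (f : α × β → ℝ) (hf : Summable f) :
    ∑' p, f p = ∑' b, ∑ a, f (a, b) := by
  rw [Summable.tsum_prod' hf hf.prod_factor, tsum_fintype]
  exact (Summable.tsum_finsetSum fun i _ => hf.prod_factor i).symm

lemma summable_prod_fintype {α β : Type*} [Fintype α] (f : α × β → ℝ)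
    (h0 : ∀ p, 0 ≤ f p) (h : ∀ a, Summable fun b => f (a, b)) : Summable f :=
  (summable_prod_of_nonneg h0).2 ⟨h, Summable.of_finite⟩

def prodEqv (K T Z : Type*) : (K × K × K) × (T × Z) ≃ K × K × K × T × Z :=
    ⟨fun p => (p.1.1, p.1.2.1, p.1.2.2, p.2.1, p.2.2),
     fun w => ((w.1, w.2.1, w.2.2.1), w.2.2.2),
     fun p => rfl, fun w => rfl⟩

lemma tsum_eq_tsum_q {K T Z : Type*} [Fintype K] (f : K × K × K × T × Z → ℝ) (hf : Summable f) :
    ∑' w, f w = ∑' q : T × Z, ∑ k : K, ∑ kx : K, ∑ ky : K, f (k, kx, ky, q.1, q.2) := by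
  set e := prodEqv K T Z with he
  have hfe : Summable (fun p : (K × K × K) × (T × Z) => f (e p)) := e.summable_iff.mpr hf
  rw [← e.tsum_eq f, tsum_prod_fintype _ hfe]
  refine tsum_congr fun q => ?_
  rw [Fintype.sum_prod_type]
  refine Finset.sum_congr rfl fun k _ => ?_
  rw [Fintype.sum_prod_type]
  rfl

end Aux

namespace ConvAux

variable {K T Z : Type*} [Fintype K]

/-- marginal on (K,F,Z) -/
def aF (P : K × K × K × T × Z → ℝ) (k : K) (q : T × Z) : ℝ :=
  ∑ kx, ∑ ky, P (k, kx, ky, q.1, q.2)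

/-- marginal on (F,Z) -/
def sF (P : K × K × K × T × Z → ℝ) (q : T × Z) : ℝ := ∑ k, aF P k q

/-- uniform times marginal -/
def bF (P : K × K × K × T × Z → ℝ) (_k : K) (q : T × Z) : ℝ :=
  (Fintype.card K : ℝ)⁻¹ * sF P q

def mF (P : K × K × K × T × Z → ℝ) (k : K) (q : T × Z) : ℝ :=
  min (aF P k q) (bF P k q)

def DF (P : K × K × K × T × Z → ℝ) (q : T × Z) : ℝ := ∑ k, (aF P k q - mF P k q)

open Classical in
/-- maximal coupling kernel -/
def piF (P : K × K × K × T × Z → ℝ) (k' k : K) (q : T × Z) : ℝ :=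
  (if k' = k then mF P k q else 0) +
    (bF P k' q - mF P k' q) * (aF P k q - mF P k q) / DF P q

/-- the new pmf -/
def QF (P : K × K × K × T × Z → ℝ) (w : K × K × K × K × T × Z) : ℝ :=
  P w.2 * (piF P w.1 w.2.1 w.2.2.2.2 / aF P w.2.1 w.2.2.2.2)

variable {P : K × K × K × T × Z → ℝ}

lemma aF_nonneg (hP0 : ∀ w, 0 ≤ P w) (k : K) (q : T × Z) : 0 ≤ aF P k q :=
  Finset.sum_nonneg fun _ _ => Finset.sum_nonneg fun _ _ => hP0 _

lemma sF_nonneg (hP0 : ∀ w, 0 ≤ P w) (q : T × Z) : 0 ≤ sF P q :=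
  Finset.sum_nonneg fun k _ => aF_nonneg hP0 k q

lemma bF_nonneg (hP0 : ∀ w, 0 ≤ P w) (k : K) (q : T × Z) : 0 ≤ bF P k q :=
  mul_nonneg (by positivity) (sF_nonneg hP0 q)

lemma mF_nonneg (hP0 : ∀ w, 0 ≤ P w) (k : K) (q : T × Z) : 0 ≤ mF P k q :=
  le_min (aF_nonneg hP0 k q) (bF_nonneg hP0 k q)

lemma mF_le_aF (k : K) (q : T × Z) : mF P k q ≤ aF P k q := min_le_left _ _

lemma mF_le_bF (k : K) (q : T × Z) : mF P k q ≤ bF P k q := min_le_right _ _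

lemma DF_nonneg (q : T × Z) : 0 ≤ DF P q :=
  Finset.sum_nonneg fun k _ => sub_nonneg.2 (mF_le_aF k q)

lemma P_le_aF (hP0 : ∀ w, 0 ≤ P w) (w : K × K × K × T × Z) :
    P w ≤ aF P w.1 w.2.2.2 := by
  have h1 : P w ≤ ∑ ky, P (w.1, w.2.1, ky, w.2.2.2.1, w.2.2.2.2) := by
    refine Finset.single_le_sum (f := fun ky => P (w.1, w.2.1, ky, w.2.2.2.1, w.2.2.2.2))
      (fun i _ => hP0 _) (Finset.mem_univ w.2.2.1)
  refine h1.trans ?_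
  refine Finset.single_le_sum
    (f := fun kx => ∑ ky, P (w.1, kx, ky, w.2.2.2.1, w.2.2.2.2))
    (fun i _ => Finset.sum_nonneg fun _ _ => hP0 _) (Finset.mem_univ w.2.1)

lemma P_eq_zero (hP0 : ∀ w, 0 ≤ P w) (w : K × K × K × T × Z)
    (h : aF P w.1 w.2.2.2 = 0) : P w = 0 :=
  le_antisymm (h ▸ P_le_aF hP0 w) (hP0 w)

lemma sum_bF (hK : Nonempty K) (q : T × Z) : ∑ k, bF P k q = sF P q := by
  have hc : (Fintype.card K : ℝ) ≠ 0 := by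
    exact_mod_cast Fintype.card_ne_zero
  simp only [bF, Finset.sum_const, Finset.card_univ, nsmul_eq_mul]
  field_simp

lemma DF_eq_sum_b (hK : Nonempty K) (q : T × Z) :
    DF P q = ∑ k, (bF P k q - mF P k q) := by
  simp only [DF, Finset.sum_sub_distrib, sum_bF hK q, sF]

lemma aF_sub_mF_le_DF (k : K) (q : T × Z) : aF P k q - mF P k q ≤ DF P q :=
  Finset.single_le_sum (f := fun k => aF P k q - mF P k q)
    (fun i _ => sub_nonneg.2 (mF_le_aF i q)) (Finset.mem_univ k)

lemma bF_sub_mF_le_DF (hK : Nonempty K) (k : K) (q : T × Z) :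
    bF P k q - mF P k q ≤ DF P q := by
  rw [DF_eq_sum_b hK q]
  exact Finset.single_le_sum (f := fun k => bF P k q - mF P k q)
    (fun i _ => sub_nonneg.2 (mF_le_bF i q)) (Finset.mem_univ k)

lemma piF_nonneg (hP0 : ∀ w, 0 ≤ P w) (k' k : K) (q : T × Z) : 0 ≤ piF P k' k q := by
  classical
  refine add_nonneg ?_ ?_
  · split <;> simp [mF_nonneg hP0]
  · exact div_nonneg (mul_nonneg (sub_nonneg.2 (mF_le_bF k' q))
      (sub_nonneg.2 (mF_le_aF k q))) (DF_nonneg q)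

lemma sum_piF_row (hK : Nonempty K) (k : K) (q : T × Z) :
    ∑ k', piF P k' k q = aF P k q := by
  classical
  simp only [piF, Finset.sum_add_distrib, Finset.sum_ite_eq', Finset.mem_univ, if_true]
  rw [← Finset.sum_div, ← Finset.sum_mul, ← DF_eq_sum_b hK q]
  by_cases hD : DF P q = 0
  · have h0 : aF P k q - mF P k q = 0 :=
      le_antisymm (hD ▸ aF_sub_mF_le_DF k q) (sub_nonneg.2 (mF_le_aF k q))
    rw [hD, h0]
    simp
    linarith
  · field_simp
    ring

lemma sum_piF_col (hP0 : ∀ w, 0 ≤ P w) (hK : Nonempty K) (k' : K) (q : T × Z) :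
    ∑ k, piF P k' k q = bF P k' q := by
  classical
  simp only [piF, Finset.sum_add_distrib, Finset.sum_ite_eq, Finset.mem_univ, if_true]
  rw [← Finset.sum_div, ← Finset.mul_sum]
  have hDsum : ∑ k, (aF P k q - mF P k q) = DF P q := rfl
  rw [hDsum]
  by_cases hD : DF P q = 0
  · have h0 : bF P k' q - mF P k' q = 0 :=
      le_antisymm (hD ▸ bF_sub_mF_le_DF hK k' q) (sub_nonneg.2 (mF_le_bF k' q))
    rw [hD, h0]
    simp
    linarith
  · field_simp
    ring

lemma piF_eq_zero (hP0 : ∀ w, 0 ≤ P w) (k' k : K) (q : T × Z)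
    (h : aF P k q = 0) : piF P k' k q = 0 := by
  classical
  have hm : mF P k q = 0 := by
    have := mF_le_aF (P := P) k q
    have := mF_nonneg hP0 k q
    linarith
  simp [piF, hm, h]

lemma piF_le_aF (hP0 : ∀ w, 0 ≤ P w) (hK : Nonempty K) (k' k : K) (q : T × Z) :
    piF P k' k q ≤ aF P k q := by
  rw [← sum_piF_row hK k q]
  exact Finset.single_le_sum (f := fun k' => piF P k' k q)
    (fun i _ => piF_nonneg hP0 i k q) (Finset.mem_univ k')

lemma mF_le_piF_diag (k : K) (q : T × Z) : mF P k q ≤ piF P k k q := by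
  classical
  simp only [piF, eq_self_iff_true, if_true]
  linarith [div_nonneg (mul_nonneg (sub_nonneg.2 (mF_le_bF (P := P) k q))
    (sub_nonneg.2 (mF_le_aF (P := P) k q))) (DF_nonneg (P := P) q)]

lemma QF_nonneg (hP0 : ∀ w, 0 ≤ P w) (w : K × K × K × K × T × Z) : 0 ≤ QF P w :=
  mul_nonneg (hP0 _) (div_nonneg (piF_nonneg hP0 _ _ _) (aF_nonneg hP0 _ _))

lemma QF_le (hP0 : ∀ w, 0 ≤ P w) (hK : Nonempty K) (w : K × K × K × K × T × Z) :
    QF P w ≤ P w.2 := by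
  have h1 : piF P w.1 w.2.1 w.2.2.2.2 / aF P w.2.1 w.2.2.2.2 ≤ 1 := by
    by_cases ha : aF P w.2.1 w.2.2.2.2 = 0
    · simp [ha]
    · rw [div_le_one (lt_of_le_of_ne (aF_nonneg hP0 _ _) (Ne.symm ha))]
      exact piF_le_aF hP0 hK _ _ _
  calc QF P w ≤ P w.2 * 1 := by
        exact mul_le_mul_of_nonneg_left h1 (hP0 _)
    _ = P w.2 := mul_one _

lemma mul_div_piF (hP0 : ∀ w, 0 ≤ P w) (k' k : K) (q : T × Z) :
    aF P k q * (piF P k' k q / aF P k q) = piF P k' k q := by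
  by_cases ha : aF P k q = 0
  · simp [ha, piF_eq_zero hP0 k' k q ha]
  · rw [mul_div_cancel₀ _ ha]  -- maybe wrong name/form
    
lemma sum_QF_fst (hP0 : ∀ w, 0 ≤ P w) (hK : Nonempty K) (w : K × K × K × T × Z) :
    ∑ k', QF P (k', w) = P w := by
  by_cases ha : aF P w.1 w.2.2.2 = 0
  · have hPw : P w = 0 := P_eq_zero hP0 w ha
    simp only [QF]
    simp [hPw]
  · simp only [QF, ← Finset.mul_sum]
    rw [← Finset.sum_div, sum_piF_row hK, div_self ha, mul_one]

lemma sum2_QF (k' k : K) (q : T × Z) :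
    ∑ kx, ∑ ky, QF P (k', k, kx, ky, q.1, q.2)
      = aF P k q * (piF P k' k q / aF P k q) := by
  simp only [QF, Prod.mk.eta, ← Finset.sum_mul]
  rfl

lemma sum_QF_marg2 (hP0 : ∀ w, 0 ≤ P w) (hK : Nonempty K) (k' : K) (q : T × Z) :
    ∑ k, ∑ kx, ∑ ky, QF P (k', k, kx, ky, q.1, q.2) = bF P k' q := by
  rw [Finset.sum_congr rfl fun k _ => sum2_QF k' k q]
  rw [Finset.sum_congr rfl fun k _ => mul_div_piF hP0 k' k q]
  exact sum_piF_col hP0 hK k' q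

lemma slice_summable (hPsum : Summable P) (k kx ky : K) :
    Summable fun q : T × Z => P (k, kx, ky, q.1, q.2) := by
  have h : (fun q : T × Z => P (k, kx, ky, q.1, q.2))
      = P ∘ (fun q : T × Z => (k, kx, ky, q.1, q.2)) := rfl
  rw [h]
  refine hPsum.comp_injective ?_
  intro x y hxy
  simpa [Prod.ext_iff] using hxy

lemma aF_summable (hPsum : Summable P) (k : K) : Summable (aF P k) := by
  unfold aF
  exact summable_finset_sum' _ _ fun kx _ =>
    summable_finset_sum' _ _ fun ky _ => slice_summable hPsum k kx ky

lemma sF_summable (hPsum : Summable P) : Summable (sF P) := by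
  unfold sF
  exact summable_finset_sum' _ _ fun k _ => aF_summable hPsum k

lemma mF_summable (hP0 : ∀ w, 0 ≤ P w) (hPsum : Summable P) (k : K) :
    Summable (mF P k) :=
  Summable.of_nonneg_of_le (fun q => mF_nonneg hP0 k q) (fun q => mF_le_aF k q)
    (aF_summable hPsum k)

lemma DF_summable (hP0 : ∀ w, 0 ≤ P w) (hPsum : Summable P) :
    Summable (DF P) := by
  unfold DF
  exact summable_finset_sum' _ _ fun k _ =>
    (aF_summable hPsum k).sub (mF_summable hP0 hPsum k)

lemma DF_eq_sF_sub (q : T × Z) : DF P q = sF P q - ∑ k, mF P k q := by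
  unfold DF sF
  rw [Finset.sum_sub_distrib]

lemma DF_eq_half (hK : Nonempty K) (q : T × Z) :
    DF P q = (1/2) * ∑ k, |aF P k q - bF P k q| := by
  have habs : ∀ k : K, |aF P k q - bF P k q|
      = aF P k q + bF P k q - 2 * mF P k q := by
    intro k
    unfold mF
    rcases le_total (aF P k q) (bF P k q) with hle | hle
    · rw [abs_of_nonpos (by linarith), min_eq_left hle]; ring
    · rw [abs_of_nonneg (by linarith), min_eq_right hle]; ring
  rw [Finset.sum_congr rfl fun k _ => habs k]
  have h1 : ∑ k, (aF P k q + bF P k q - 2 * mF P k q)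
      = sF P q + sF P q - 2 * ∑ k, mF P k q := by
    rw [Finset.sum_sub_distrib, Finset.sum_add_distrib, sum_bF hK q, ← Finset.mul_sum]
    rfl
  rw [h1, DF_eq_sF_sub]
  ring

end ConvAux

open ConvAux in
/-- conversion of an (ε,δ)-secret key into an (ε+δ,0)-secret key.
Coordinates of `P` are `(K, Kx, Ky, F, Z)`; coordinates of `Q` are `(K', K, Kx, Ky, F, Z)`. -/
theorem conversion_to_high_secrecy
    {K T Z : Type*} [Fintype K] [Countable T] [Countable Z]
    (ε δ : ℝ) (hε0 : 0 ≤ ε) (hε1 : ε < 1) (hδ0 : 0 ≤ δ) (hδ1 : δ < 1)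
    (P : K × K × K × T × Z → ℝ) (hP : IsPMF P)
    (hrel : 1 - ε ≤ probOf P {w | w.1 = w.2.1 ∧ w.2.1 = w.2.2.1})
    (hsec : tvDist
        (fun q : K × T × Z => ∑' (kx : K) (ky : K), P (q.1, kx, ky, q.2.1, q.2.2))
        (fun q : K × T × Z => (Fintype.card K : ℝ)⁻¹ *
          ∑' (k : K) (kx : K) (ky : K), P (k, kx, ky, q.2.1, q.2.2)) ≤ δ) :
    ∃ Q : K × K × K × K × T × Z → ℝ, IsPMF Q ∧
      -- the marginal of Q on (K, Kx, Ky, F, Z) equals P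
      (∀ w : K × K × K × T × Z,
        (∑' k' : K, Q (k', w.1, w.2.1, w.2.2.1, w.2.2.2.1, w.2.2.2.2)) = P w) ∧
      -- Q_{K'FZ} = P_unif × P_{FZ} exactly
      (∀ q : K × T × Z,
        (∑' (k : K) (kx : K) (ky : K), Q (q.1, k, kx, ky, q.2.1, q.2.2))
          = (Fintype.card K : ℝ)⁻¹ *
              ∑' (k : K) (kx : K) (ky : K), P (k, kx, ky, q.2.1, q.2.2)) ∧
      -- Pr_Q[K' = Kx = Ky] ≥ 1 - ε - δ
      1 - ε - δ ≤ probOf Q {w | w.1 = w.2.2.1 ∧ w.2.2.1 = w.2.2.2.1} := by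
  classical
  obtain ⟨hP0, hP1⟩ := hP
  have hPsum : Summable P := by
    by_contra h
    rw [tsum_eq_zero_of_not_summable h] at hP1
    norm_num at hP1
  have hK : Nonempty K := by
    by_contra h
    haveI : IsEmpty K := not_nonempty_iff.mp h
    rw [tsum_empty] at hP1
    norm_num at hP1
  set Qf := QF P with hQfdef
  have hQ0 : ∀ w, 0 ≤ Qf w := fun w => QF_nonneg hP0 w
  have hQle : ∀ (k' : K) (w : K × K × K × T × Z), Qf (k', w) ≤ P w :=
    fun k' w => QF_le hP0 hK (k', w)
  have hQsum : Summable Qf :=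
    summable_prod_fintype Qf (fun p => hQ0 p)
      (fun k' => Summable.of_nonneg_of_le (fun w => hQ0 (k', w)) (fun w => hQle k' w) hPsum)
  have hrow : ∀ w, ∑ k' : K, Qf (k', w) = P w := sum_QF_fst hP0 hK
  have htot : ∑' p, Qf p = 1 := by
    rw [tsum_prod_fintype Qf hQsum]
    calc ∑' w, ∑ k' : K, Qf (k', w) = ∑' w, P w := tsum_congr hrow
      _ = 1 := hP1
  refine ⟨Qf, ⟨hQ0, htot⟩, ?_, ?_, ?_⟩
  · intro w
    rw [tsum_fintype]
    exact hrow w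
  · intro q
    simp only [tsum_fintype]
    exact sum_QF_marg2 hP0 hK q.1 q.2
  -- the probability bound
  have haS : ∀ k, Summable (aF P k) := fun k => aF_summable hPsum k
  have hsS : Summable (sF P) := sF_summable hPsum
  have hmS : ∀ k, Summable (mF P k) := fun k => mF_summable hP0 hPsum k
  have hDS : Summable (DF P) := DF_summable hP0 hPsum
  -- total mass of sF
  have hsum_s : ∑' q : T × Z, sF P q = 1 := by
    have h2 : ∑' q : T × Z, sF P q = ∑' w, P w := by
      rw [tsum_eq_tsum_q P hPsum]
      exact tsum_congr fun q => rfl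
    rw [h2, hP1]
  -- hsec gives the bound on DF
  have hDle : ∑' q : T × Z, DF P q ≤ δ := by
    have habsS : ∀ k : K, Summable fun q : T × Z => |aF P k q - bF P k q| := by
      intro k
      have : Summable fun q : T × Z => bF P k q := hsS.mul_left _
      exact ((haS k).sub this).abs
    have hABsum : Summable (fun p : K × (T × Z) => |aF P p.1 p.2 - bF P p.1 p.2|) :=
      summable_prod_fintype _ (fun p => abs_nonneg _) (fun k => habsS k)
    have h2 := tsum_prod_fintype
      (fun p : K × (T × Z) => |aF P p.1 p.2 - bF P p.1 p.2|) hABsum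
    have hset : (fun q : T × Z => DF P q)
        = fun q => (1/2) * ∑ k, |aF P k q - bF P k q| :=
      funext fun q => DF_eq_half hK q
    rw [hset, tsum_mul_left]
    simp only [tvDist, tsum_fintype] at hsec
    calc (1/2 : ℝ) * ∑' q : T × Z, ∑ k, |aF P k q - bF P k q|
        = (1/2 : ℝ) * ∑' p : K × (T × Z), |aF P p.1 p.2 - bF P p.1 p.2| := by
          exact congrArg (fun t => (1/2 : ℝ) * t) h2.symm
      _ ≤ δ := hsec
  -- lower bound for the diagonal mass
  set Fset : Set (K × K × K × K × T × Z) := {p | p.1 = p.2.1} with hFdef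
  have hpF : ∑' p, Fset.indicator Qf p = ∑' w : K × K × K × T × Z, Qf (w.1, w) := by
    rw [tsum_prod_fintype _ (hQsum.indicator _)]
    refine tsum_congr fun w => ?_
    have h3 : ∀ k' : K, Fset.indicator Qf (k', w) = if k' = w.1 then Qf (k', w) else 0 := by
      intro k'
      simp [Set.indicator_apply, hFdef, Set.mem_setOf_eq]
    rw [Finset.sum_congr rfl fun k' _ => h3 k']
    simp
  have hdiag : Summable (fun w : K × K × K × T × Z => Qf (w.1, w)) :=
    Summable.of_nonneg_of_le (fun w => hQ0 _) (fun w => hQle w.1 w) hPsum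
  have hpF2 : ∑' w : K × K × K × T × Z, Qf (w.1, w)
      = ∑' q : T × Z, ∑ k, ∑ kx, ∑ ky, Qf (k, k, kx, ky, q.1, q.2) :=
    tsum_eq_tsum_q _ hdiag
  have hinner : ∀ q : T × Z, ∑ k, mF P k q
      ≤ ∑ k, ∑ kx, ∑ ky, Qf (k, k, kx, ky, q.1, q.2) := by
    intro q
    refine Finset.sum_le_sum fun k _ => ?_
    rw [sum2_QF k k q]
    by_cases ha : aF P k q = 0
    · have hm : mF P k q = 0 := by
        have h1 := mF_le_aF (P := P) k q
        have h2 := mF_nonneg hP0 k q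
        linarith
      rw [hm, ha]
      simp
    · rw [mul_div_piF hP0 k k q]
      exact mF_le_piF_diag k q
  have hS2 : Summable (fun q : T × Z => ∑ k, ∑ kx, ∑ ky, Qf (k, k, kx, ky, q.1, q.2)) := by
    refine Summable.of_nonneg_of_le
      (fun q => Finset.sum_nonneg fun k _ => Finset.sum_nonneg fun kx _ =>
        Finset.sum_nonneg fun ky _ => hQ0 _)
      (fun q => ?_) hsS
    refine Finset.sum_le_sum fun k _ => ?_
    calc ∑ kx, ∑ ky, Qf (k, k, kx, ky, q.1, q.2)
        ≤ ∑ kx, ∑ ky, P (k, kx, ky, q.1, q.2) :=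
          Finset.sum_le_sum fun kx _ => Finset.sum_le_sum fun ky _ => hQle _ _
      _ = aF P k q := rfl
  have hsum_m : Summable (fun q : T × Z => ∑ k, mF P k q) :=
    summable_finset_sum' _ _ fun k _ => hmS k
  have h_mtot : ∑' q : T × Z, ∑ k, mF P k q = 1 - ∑' q : T × Z, DF P q := by
    have h4 : (fun q : T × Z => ∑ k, mF P k q) = fun q => sF P q - DF P q := by
      funext q
      have := DF_eq_sF_sub (P := P) q
      linarith
    rw [h4, Summable.tsum_sub hsS hDS, hsum_s]
  have hge : 1 - δ ≤ ∑' p, Fset.indicator Qf p := by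
    rw [hpF, hpF2]
    have h3 := Summable.tsum_le_tsum hinner hsum_m hS2
    rw [h_mtot] at h3
    linarith
  -- the event E2
  set E2 : Set (K × K × K × K × T × Z) :=
    {p | p.2.1 = p.2.2.1 ∧ p.2.2.1 = p.2.2.2.1} with hE2def
  have hpE : ∑' p, E2.indicator Qf p = probOf P {w | w.1 = w.2.1 ∧ w.2.1 = w.2.2.1} := by
    rw [tsum_prod_fintype _ (hQsum.indicator _)]
    have h5 : ∀ w : K × K × K × T × Z, ∑ k' : K, E2.indicator Qf (k', w)
        = Set.indicator {w : K × K × K × T × Z | w.1 = w.2.1 ∧ w.2.1 = w.2.2.1} P w := by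
      intro w
      by_cases hw : w ∈ {w : K × K × K × T × Z | w.1 = w.2.1 ∧ w.2.1 = w.2.2.1}
      · rw [Set.indicator_of_mem hw]
        rw [Finset.sum_congr rfl fun k' _ =>
          Set.indicator_of_mem (show (k', w) ∈ E2 from hw) Qf]
        exact hrow w
      · rw [Set.indicator_of_notMem hw]
        rw [Finset.sum_congr rfl fun k' _ =>
          Set.indicator_of_notMem (show (k', w) ∉ E2 from fun hc => hw hc) Qf]
        simp
    rw [tsum_congr h5]
    unfold probOf
    exact (tsum_subtype _ _).symm
  -- final set
  set Gset : Set (K × K × K × K × T × Z) :=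
    {w | w.1 = w.2.2.1 ∧ w.2.2.1 = w.2.2.2.1} with hGdef
  have hpoint : ∀ p, Fset.indicator Qf p + E2.indicator Qf p - Qf p
      ≤ Gset.indicator Qf p := by
    intro p
    have hGnn : 0 ≤ Gset.indicator Qf p :=
      Set.indicator_nonneg (fun a _ => hQ0 a) p
    by_cases hF : p ∈ Fset <;> by_cases hE : p ∈ E2
    · have hG : p ∈ Gset := ⟨(hF : p.1 = p.2.1).trans hE.1, hE.2⟩
      rw [Set.indicator_of_mem hF, Set.indicator_of_mem hE, Set.indicator_of_mem hG]
      linarith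
    · rw [Set.indicator_of_mem hF, Set.indicator_of_notMem hE]
      linarith
    · rw [Set.indicator_of_notMem hF, Set.indicator_of_mem hE]
      linarith
    · rw [Set.indicator_of_notMem hF, Set.indicator_of_notMem hE]
      linarith [hQ0 p]
  have hsum_lhs : Summable (fun p => Fset.indicator Qf p + E2.indicator Qf p - Qf p) :=
    ((hQsum.indicator _).add (hQsum.indicator _)).sub hQsum
  have h5 := Summable.tsum_le_tsum hpoint hsum_lhs (hQsum.indicator _)
  have h6 : ∑' p, (Fset.indicator Qf p + E2.indicator Qf p - Qf p)
      = (∑' p, Fset.indicator Qf p) + (∑' p, E2.indicator Qf p) - 1 := by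
    rw [Summable.tsum_sub ((hQsum.indicator _).add (hQsum.indicator _)) hQsum,
      Summable.tsum_add (hQsum.indicator _) (hQsum.indicator _), htot]
  unfold probOf
  rw [tsum_subtype]
  have h7 : 1 - ε ≤ ∑' p, E2.indicator Qf p := by
    rw [hpE]
    exact hrel
  linarith [h5, h6, hge, h7]
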